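/- Let A be a unital C*-algebra with a faithful tracial state τ, and let {e_{x,a} : x, a ∈ Fin n} be projections in A with ∑_a e_{x,a} = 1 for all x, such that the density p(a,b|x,y) := τ(e_{x,a} e_{y,b}) is bisynchronous (in particular τ(e_{x,a} e_{y,a}) = 0 for x ≠ y). Then e_{x,a} e_{y,a} = 0 for x ≠ y, and hence (e_{x,a}) is a quantum permutation. -/
import Mathlib


open ComplexOrder in
/-- If `τ` is a faithful tracial state and the density `p(a,b|x,y) = τ(e_{x,a} e_{y,b})`
is bisynchronous (in particular `τ(e_{x,a} e_{y,a}) = 0` for `x ≠ y`), then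
`e_{x,a} e_{y,a} = 0` for `x ≠ y` and the columns sum to 1, so `(e_{x,a})` is a
quantum permutation. -/
theorem bisynchronous_trace_forces_quantum_permutation
    {A : Type*} [NormedRing A] [StarRing A] [CStarRing A] [NormedAlgebra ℂ A]
    [StarModule ℂ A] [CompleteSpace A]
    (τ : A →ₗ[ℂ] ℂ) (hτ1 : τ 1 = 1)
    (hτtr : ∀ a b : A, τ (a * b) = τ (b * a))
    (hτpos : ∀ a : A, 0 ≤ τ (star a * a))
    (hτfaith : ∀ a : A, τ (star a * a) = 0 → a = 0)
    {n : ℕ} (e : Fin n → Fin n → A)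
    (hidem : ∀ x a, e x a * e x a = e x a)
    (hsa : ∀ x a, star (e x a) = e x a)
    (hrow : ∀ x, ∑ a, e x a = 1)
    (hbisync : ∀ x y a, x ≠ y → τ (e x a * e y a) = 0) :
    (∀ x y a, x ≠ y → e x a * e y a = 0) ∧ (∀ a, ∑ x, e x a = 1) := by
  have hzero : ∀ x y a, x ≠ y → e x a * e y a = 0 := by
    intro x y a hxy
    apply hτfaith
    have hstar : star (e x a * e y a) = e y a * e x a := by
      rw [star_mul, hsa, hsa]
    rw [hstar]
    have h1 : e y a * e x a * (e x a * e y a) = e y a * (e x a * e y a) := by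
      rw [mul_assoc, ← mul_assoc (e x a), hidem]
    rw [h1, hτtr, mul_assoc, hidem, hbisync x y a hxy]
  refine ⟨hzero, ?_⟩
  -- column sums
  set s : Fin n → A := fun a => ∑ x, e x a with hs
  have hsproj : ∀ a, s a * s a = s a := by
    intro a
    simp only [hs, Finset.sum_mul, Finset.mul_sum]
    refine Finset.sum_congr rfl fun x _ => ?_
    rw [Finset.sum_eq_single x (fun y _ hyx => hzero y x a hyx) (by simp)]
    exact hidem x a
  have hssa : ∀ a, star (s a) = s a := by
    intro a; simp [hs, star_sum, hsa]
  have htproj : ∀ a, star (1 - s a) * (1 - s a) = 1 - s a := by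
    intro a
    rw [star_sub, star_one, hssa, sub_mul, mul_sub, mul_sub, one_mul, mul_one,
      hsproj, one_mul]
    abel
  have hsum0 : ∑ a, (1 - s a) = 0 := by
    have : ∑ a : Fin n, s a = (n : ℕ) • (1 : A) := by
      rw [Finset.sum_comm (f := fun a x => e x a)]
      simp [hrow]
    simp [Finset.sum_sub_distrib, this]
  have hτ0 : ∀ a, τ (1 - s a) = 0 := by
    have hsum : ∑ a, τ (1 - s a) = 0 := by
      rw [← map_sum, hsum0, map_zero]
    intro a
    have := (Finset.sum_eq_zero_iff_of_nonneg (fun b _ => by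
      have := hτpos (1 - s b); rwa [htproj b] at this)).mp hsum
    exact this a (Finset.mem_univ a)
  intro a
  have := hτfaith (1 - s a) (by rw [htproj]; exact hτ0 a)
  have h2 : s a = 1 := (sub_eq_zero.mp this).symm
  simpa [hs] using h2
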